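/- In the free group F(A,B,C), suppose f_0 A^s B^s C^s f_0^{-1} · ∏_{j=1}^m f_j (CBA)^{-1} f_j^{-1} · ∏_{k=1}^q g_k (CBA) g_k^{-1} = e for some f_j, g_k ∈ F(A,B,C) and natural numbers s, m, q. Then s = 0. -/
import Mathlib

/-- Discrete Heisenberg group as ℤ³ with twisted multiplication. -/
@[ext] structure Heis where
  x : ℤ
  y : ℤ
  z : ℤ

namespace Heis

instance : Mul Heis := ⟨fun p q => ⟨p.x + q.x, p.y + q.y, p.z + q.z + p.x * q.y⟩⟩
instance : One Heis := ⟨⟨0, 0, 0⟩⟩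
instance : Inv Heis := ⟨fun p => ⟨-p.x, -p.y, p.x * p.y - p.z⟩⟩

@[simp] lemma mul_x (p q : Heis) : (p * q).x = p.x + q.x := rfl
@[simp] lemma mul_y (p q : Heis) : (p * q).y = p.y + q.y := rfl
@[simp] lemma mul_z (p q : Heis) : (p * q).z = p.z + q.z + p.x * q.y := rfl
@[simp] lemma one_x : (1 : Heis).x = 0 := rfl
@[simp] lemma one_y : (1 : Heis).y = 0 := rfl
@[simp] lemma one_z : (1 : Heis).z = 0 := rfl
@[simp] lemma inv_x (p : Heis) : p⁻¹.x = -p.x := rfl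
@[simp] lemma inv_y (p : Heis) : p⁻¹.y = -p.y := rfl
@[simp] lemma inv_z (p : Heis) : p⁻¹.z = p.x * p.y - p.z := rfl

instance : Group Heis where
  mul_assoc a b c := by ext <;> simp <;> ring
  one_mul a := by ext <;> simp
  mul_one a := by ext <;> simp
  inv_mul_cancel a := by ext <;> simp

def a : Heis := ⟨1, 0, 0⟩
def b : Heis := ⟨0, 1, 0⟩

lemma a_pow (n : ℕ) : a ^ n = ⟨n, 0, 0⟩ := by
  induction n with
  | zero => rfl
  | succ k ih => rw [pow_succ, ih]; ext <;> simp [a] <;> push_cast <;> ring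

lemma b_pow (n : ℕ) : b ^ n = ⟨0, n, 0⟩ := by
  induction n with
  | zero => rfl
  | succ k ih => rw [pow_succ, ih]; ext <;> simp [b] <;> push_cast <;> ring

lemma ba_pow (n : ℕ) : (b * a) ^ n = ⟨n, n, (n.choose 2 : ℤ)⟩ := by
  induction n with
  | zero => rfl
  | succ k ih =>
    rw [pow_succ, ih]
    have hch : (k + 1).choose 2 = k + k.choose 2 := by
      rw [Nat.choose_succ_succ]; simp [Nat.choose_one_right]
    ext <;> simp [a, b, hch] <;> push_cast <;> ring

end Heis

/-- in `F(A,B,C)`, if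
`f₀ A^s B^s C^s f₀⁻¹ ⬝ ∏_{j=1}^m f_j (CBA)⁻¹ f_j⁻¹ ⬝ ∏_{k=1}^q g_k (CBA) g_k⁻¹ = e`,
then `s = 0`. -/
theorem conj_product_relation_forces_zero (s m q : ℕ)
    (A B C : FreeGroup (Fin 3))
    (hA : A = FreeGroup.of 0) (hB : B = FreeGroup.of 1) (hC : C = FreeGroup.of 2)
    (f₀ : FreeGroup (Fin 3)) (f : Fin m → FreeGroup (Fin 3)) (g : Fin q → FreeGroup (Fin 3))
    (h : f₀ * A ^ s * B ^ s * C ^ s * f₀⁻¹ *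
        (List.ofFn fun j => f j * (C * B * A)⁻¹ * (f j)⁻¹).prod *
        (List.ofFn fun k => g k * (C * B * A) * (g k)⁻¹).prod = 1) :
    s = 0 := by
  set φ : FreeGroup (Fin 3) →* Heis := FreeGroup.lift ![Heis.a, Heis.b, (Heis.b * Heis.a)⁻¹]
  have hφA : φ A = Heis.a := by simp [hA, φ]
  have hφB : φ B = Heis.b := by simp [hB, φ]
  have hφC : φ C = (Heis.b * Heis.a)⁻¹ := by simp [hC, φ]
  have hCBA : φ (C * B * A) = 1 := by
    simp [map_mul, hφA, hφB, hφC, mul_assoc]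
  have h1 : φ (List.ofFn fun j => f j * (C * B * A)⁻¹ * (f j)⁻¹).prod = 1 := by
    rw [map_list_prod]
    apply List.prod_eq_one
    intro x hx
    simp only [List.map_ofFn, List.mem_ofFn] at hx
    obtain ⟨j, rfl⟩ := hx
    simp only [Function.comp_apply]
    rw [map_mul, map_mul, map_inv, map_inv, hCBA]
    simp
  have h2 : φ (List.ofFn fun k => g k * (C * B * A) * (g k)⁻¹).prod = 1 := by
    rw [map_list_prod]
    apply List.prod_eq_one
    intro x hx
    simp only [List.map_ofFn, List.mem_ofFn] at hx
    obtain ⟨k, rfl⟩ := hx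
    simp only [Function.comp_apply]
    rw [map_mul, map_mul, map_inv, hCBA]
    simp
  have h3 := congrArg φ h
  rw [map_mul, map_mul, h1, h2, mul_one, mul_one, map_one, map_mul, map_mul, map_mul,
    map_mul, map_inv, map_pow, map_pow, map_pow, hφA, hφB, hφC] at h3
  have h4 : Heis.a ^ s * Heis.b ^ s * ((Heis.b * Heis.a)⁻¹) ^ s = 1 := by
    have := congrArg (fun w => (φ f₀)⁻¹ * w * φ f₀) h3
    simpa [mul_assoc] using this
  rw [inv_pow] at h4
  have h5 : Heis.a ^ s * Heis.b ^ s = (Heis.b * Heis.a) ^ s := mul_inv_eq_one.mp h4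
  rw [Heis.a_pow, Heis.b_pow, Heis.ba_pow] at h5
  have hz := congrArg Heis.z h5
  simp only [Heis.mul_z] at hz
  have hs : (s : ℤ) * s = (s.choose 2 : ℤ) := by simpa using hz
  have hs' : s * s = s.choose 2 := by exact_mod_cast hs
  have hle : s.choose 2 ≤ s * (s - 1) := Nat.choose_two_right s ▸ Nat.div_le_self _ _
  have hle' : s * s ≤ s * (s - 1) := hs' ▸ hle
  rcases Nat.eq_zero_or_pos s with h0 | hpos
  · exact h0
  · exfalso
    have hlt : s * (s - 1) < s * s :=
      Nat.mul_lt_mul_of_pos_left (Nat.sub_lt hpos one_pos) hpos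
    omega
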